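/- Let (X,μ) be a measure space, 1 ≤ p < ∞, and (f_n) a sequence of measurable functions with f_n → f a.e. and (f_n) bounded in L^p_μ(X). Then the limit lim_{n→∞} (‖f_n‖_{L^p_μ}^p − ‖f − f_n‖_{L^p_μ}^p) exists and equals ‖f‖_{L^p_μ}^p. -/

import Mathlib

open MeasureTheory Filter

lemma aux_two {p : ℝ} (hp : 0 ≤ p) (x y : ℝ) :
    |x + y| ^ p ≤ 2 ^ p * (|x| ^ p + |y| ^ p) := by
  rcases le_total |x| |y| with h | h
  · calc |x + y| ^ p ≤ (2 * |y|) ^ p := by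
          apply Real.rpow_le_rpow (abs_nonneg _) _ hp
          calc |x + y| ≤ |x| + |y| := abs_add_le _ _
            _ ≤ 2 * |y| := by linarith
      _ = 2 ^ p * |y| ^ p := Real.mul_rpow (by norm_num) (abs_nonneg _)
      _ ≤ 2 ^ p * (|x| ^ p + |y| ^ p) := by
          have h1 : (0:ℝ) ≤ |x| ^ p := Real.rpow_nonneg (abs_nonneg _) _
          have h2 : (0:ℝ) ≤ (2:ℝ) ^ p := Real.rpow_nonneg (by norm_num) _
          nlinarith
  · calc |x + y| ^ p ≤ (2 * |x|) ^ p := by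
          apply Real.rpow_le_rpow (abs_nonneg _) _ hp
          calc |x + y| ≤ |x| + |y| := abs_add_le _ _
            _ ≤ 2 * |x| := by linarith
      _ = 2 ^ p * |x| ^ p := Real.mul_rpow (by norm_num) (abs_nonneg _)
      _ ≤ 2 ^ p * (|x| ^ p + |y| ^ p) := by
          have h1 : (0:ℝ) ≤ |y| ^ p := Real.rpow_nonneg (abs_nonneg _) _
          have h2 : (0:ℝ) ≤ (2:ℝ) ^ p := Real.rpow_nonneg (by norm_num) _
          nlinarith

lemma aux_key {p : ℝ} (hp : 1 ≤ p) {ε : ℝ} (hε : 0 < ε) :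
    ∃ C : ℝ, 0 ≤ C ∧ ∀ a b : ℝ, |(|a + b| ^ p - |a| ^ p)| ≤ ε * |a| ^ p + C * |b| ^ p := by
  have hp0 : (0:ℝ) ≤ p := by linarith
  -- choose δ
  have h1 : Tendsto (fun t : ℝ => (1 + t) ^ p) (nhds 0) (nhds 1) := by
    have hc : Continuous fun t : ℝ => (1 + t) ^ p :=
      (continuous_const.add continuous_id).rpow_const (fun t => Or.inr hp0)
    have := hc.tendsto 0
    simpa using this
  have h2 : Tendsto (fun t : ℝ => (1 - t) ^ p) (nhds 0) (nhds 1) := by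
    have hc : Continuous fun t : ℝ => (1 - t) ^ p :=
      (continuous_const.sub continuous_id).rpow_const (fun t => Or.inr hp0)
    have := hc.tendsto 0
    simpa using this
  have e1 : ∀ᶠ t : ℝ in nhds 0, (1 + t) ^ p < 1 + ε :=
    h1.eventually (gt_mem_nhds (by linarith))
  have e2 : ∀ᶠ t : ℝ in nhds 0, 1 - ε < (1 - t) ^ p :=
    h2.eventually (lt_mem_nhds (by linarith))
  obtain ⟨δ₀, hδ₀, hball⟩ := Metric.eventually_nhds_iff_ball.mp (e1.and e2)
  set δ : ℝ := min (δ₀ / 2) (1 / 2) with hδdef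
  have hδpos : 0 < δ := lt_min (by linarith) (by norm_num)
  have hδlt : δ < 1 := lt_of_le_of_lt (min_le_right _ _) (by norm_num)
  have hδball : δ ∈ Metric.ball (0:ℝ) δ₀ := by
    simp only [Metric.mem_ball, Real.dist_eq, sub_zero, abs_of_pos hδpos]
    exact lt_of_le_of_lt (min_le_left _ _) (by linarith)
  obtain ⟨hup, hlo⟩ := hball δ hδball
  refine ⟨(2 ^ p + 1) * ((1 / δ) ^ p + 1), by positivity, fun a b => ?_⟩
  have ha : (0:ℝ) ≤ |a| ^ p := Real.rpow_nonneg (abs_nonneg _) _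
  have hb : (0:ℝ) ≤ |b| ^ p := Real.rpow_nonneg (abs_nonneg _) _
  rcases le_total |b| (δ * |a|) with hcase | hcase
  · -- small b case
    have hub : |a + b| ^ p ≤ (1 + ε) * |a| ^ p := by
      calc |a + b| ^ p ≤ ((1 + δ) * |a|) ^ p := by
            apply Real.rpow_le_rpow (abs_nonneg _) _ hp0
            calc |a + b| ≤ |a| + |b| := abs_add_le _ _
              _ ≤ (1 + δ) * |a| := by linarith
        _ = (1 + δ) ^ p * |a| ^ p := Real.mul_rpow (by linarith) (abs_nonneg _)
        _ ≤ (1 + ε) * |a| ^ p := by nlinarith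
    have hlb : (1 - ε) * |a| ^ p ≤ |a + b| ^ p := by
      calc (1 - ε) * |a| ^ p ≤ (1 - δ) ^ p * |a| ^ p := by nlinarith
        _ = ((1 - δ) * |a|) ^ p := (Real.mul_rpow (by linarith) (abs_nonneg _)).symm
        _ ≤ |a + b| ^ p := by
            apply Real.rpow_le_rpow (by nlinarith [abs_nonneg a]) _ hp0
            have := abs_sub_abs_le_abs_sub a (-b)
            simp only [abs_neg, sub_neg_eq_add] at this
            nlinarith
    have hC : (0:ℝ) ≤ (2 ^ p + 1) * ((1 / δ) ^ p + 1) * |b| ^ p := by positivity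
    rw [abs_sub_le_iff]
    constructor <;> nlinarith
  · -- large b case
    have hba : |a| ^ p ≤ (1 / δ) ^ p * |b| ^ p := by
      rw [← Real.mul_rpow (by positivity) (abs_nonneg _)]
      apply Real.rpow_le_rpow (abs_nonneg _) _ hp0
      rw [div_mul_eq_mul_div, one_mul, le_div_iff₀ hδpos]
      nlinarith
    have hab : |a + b| ^ p ≤ 2 ^ p * (|a| ^ p + |b| ^ p) := aux_two hp0 a b
    have h2p : (0:ℝ) ≤ (2:ℝ) ^ p := Real.rpow_nonneg (by norm_num) _
    have h1d : (0:ℝ) ≤ (1 / δ) ^ p := Real.rpow_nonneg (by positivity) _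
    have habs : |(|a + b| ^ p - |a| ^ p)| ≤ |a + b| ^ p + |a| ^ p := by
      rw [abs_sub_le_iff]
      constructor <;> nlinarith [Real.rpow_nonneg (abs_nonneg (a+b)) p]
    calc |(|a + b| ^ p - |a| ^ p)| ≤ |a + b| ^ p + |a| ^ p := habs
      _ ≤ (2 ^ p + 1) * ((1 / δ) ^ p + 1) * |b| ^ p := by nlinarith
      _ ≤ ε * |a| ^ p + (2 ^ p + 1) * ((1 / δ) ^ p + 1) * |b| ^ p := by nlinarith

lemma aux_cont {p : ℝ} (hp : 0 ≤ p) : Continuous fun t : ℝ => |t| ^ p :=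
  continuous_abs.rpow_const (fun t => Or.inr hp)

/-- Brezis–Lieb lemma: if `f_n → f` a.e. and `(f_n)` is bounded in
`L^p_μ(X)`, then `‖f_n‖_p^p − ‖f − f_n‖_p^p → ‖f‖_p^p`. -/
theorem stmt5 {X : Type*} [MeasurableSpace X] (μ : Measure X)
    (p : ℝ) (hp : 1 ≤ p) (f : ℕ → X → ℝ) (g : X → ℝ)
    (hfmeas : ∀ n, Measurable (f n)) (hgmeas : Measurable g)
    (hae : ∀ᵐ x ∂μ, Tendsto (fun n => f n x) atTop (nhds (g x)))
    (hint : ∀ n, Integrable (fun x => |f n x| ^ p) μ)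
    (hbdd : ∃ C : ℝ, ∀ n, ∫ x, |f n x| ^ p ∂μ ≤ C) :
    Integrable (fun x => |g x| ^ p) μ ∧
      Tendsto (fun n => (∫ x, |f n x| ^ p ∂μ) - ∫ x, |g x - f n x| ^ p ∂μ) atTop
        (nhds (∫ x, |g x| ^ p ∂μ)) := by
  have hp0 : (0:ℝ) ≤ p := by linarith
  have hppos : (0:ℝ) < p := by linarith
  obtain ⟨C₀, hC₀⟩ := hbdd
  have hC₀0 : (0:ℝ) ≤ C₀ :=
    le_trans (integral_nonneg fun x => Real.rpow_nonneg (abs_nonneg _) _) (hC₀ 0)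
  -- measurability
  have hmf : ∀ n, Measurable fun x => |f n x| ^ p :=
    fun n => (aux_cont hp0).measurable.comp (hfmeas n)
  have hmg : Measurable fun x => |g x| ^ p := (aux_cont hp0).measurable.comp hgmeas
  have hmJ : ∀ n, Measurable fun x => |g x - f n x| ^ p :=
    fun n => (aux_cont hp0).measurable.comp (hgmeas.sub (hfmeas n))
  -- pointwise convergence of |f n|^p
  have htend : ∀ᵐ x ∂μ, Tendsto (fun n => |f n x| ^ p) atTop (nhds (|g x| ^ p)) :=
    hae.mono fun x hx => hx.abs.rpow_const (Or.inr hp0)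
  -- integrability of |g|^p via Fatou
  have hgint : Integrable (fun x => |g x| ^ p) μ := by
    refine ⟨hmg.aestronglyMeasurable, ?_⟩
    rw [hasFiniteIntegral_iff_ofReal (Eventually.of_forall fun x =>
      Real.rpow_nonneg (abs_nonneg _) _)]
    have key : ∫⁻ x, ENNReal.ofReal (|g x| ^ p) ∂μ ≤ ENNReal.ofReal C₀ := by
      have h1 : ∀ᵐ x ∂μ, Tendsto (fun n => ENNReal.ofReal (|f n x| ^ p)) atTop
          (nhds (ENNReal.ofReal (|g x| ^ p))) :=
        htend.mono fun x hx => (ENNReal.continuous_ofReal.tendsto _).comp hx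
      calc ∫⁻ x, ENNReal.ofReal (|g x| ^ p) ∂μ
          = ∫⁻ x, liminf (fun n => ENNReal.ofReal (|f n x| ^ p)) atTop ∂μ :=
            lintegral_congr_ae (h1.mono fun x hx => hx.liminf_eq.symm)
        _ ≤ liminf (fun n => ∫⁻ x, ENNReal.ofReal (|f n x| ^ p) ∂μ) atTop :=
            lintegral_liminf_le fun n => (hmf n).ennreal_ofReal
        _ ≤ ENNReal.ofReal C₀ := by
            refine liminf_le_of_le (by isBoundedDefault) ?_
            intro b hb
            obtain ⟨n, hn⟩ := hb.exists
            calc b ≤ ∫⁻ x, ENNReal.ofReal (|f n x| ^ p) ∂μ := hn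
              _ = ENNReal.ofReal (∫ x, |f n x| ^ p ∂μ) :=
                  (ofReal_integral_eq_lintegral_ofReal (hint n)
                    (Eventually.of_forall fun x => Real.rpow_nonneg (abs_nonneg _) _)).symm
              _ ≤ ENNReal.ofReal C₀ := ENNReal.ofReal_le_ofReal (hC₀ n)
    exact lt_of_le_of_lt key ENNReal.ofReal_lt_top
  set K : ℝ := ∫ x, |g x| ^ p ∂μ with hKdef
  have hK0 : 0 ≤ K := integral_nonneg fun x => Real.rpow_nonneg (abs_nonneg _) _
  -- integrability of |g - f n|^p
  have hpt2 : ∀ n x, |g x - f n x| ^ p ≤ 2 ^ p * |g x| ^ p + 2 ^ p * |f n x| ^ p := by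
    intro n x
    have := aux_two hp0 (g x) (-f n x)
    simp only [abs_neg, ← sub_eq_add_neg] at this
    linarith
  have hJint : ∀ n, Integrable (fun x => |g x - f n x| ^ p) μ := by
    intro n
    refine Integrable.mono' ((hgint.const_mul (2 ^ p)).add ((hint n).const_mul (2 ^ p)))
      (hmJ n).aestronglyMeasurable (Eventually.of_forall fun x => ?_)
    rw [Real.norm_eq_abs, abs_of_nonneg (Real.rpow_nonneg (abs_nonneg _) _)]
    exact hpt2 n x
  -- uniform bound on ∫ |g - f n|^p
  set M : ℝ := 2 ^ p * K + 2 ^ p * C₀ with hMdef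
  have h2p0 : (0:ℝ) ≤ 2 ^ p := Real.rpow_nonneg (by norm_num) _
  have hM0 : 0 ≤ M := by nlinarith
  have hJbdd : ∀ n, ∫ x, |g x - f n x| ^ p ∂μ ≤ M := by
    intro n
    calc ∫ x, |g x - f n x| ^ p ∂μ
        ≤ ∫ x, (2 ^ p * |g x| ^ p + 2 ^ p * |f n x| ^ p) ∂μ :=
          integral_mono (hJint n) ((hgint.const_mul _).add ((hint n).const_mul _))
            fun x => hpt2 n x
      _ = 2 ^ p * K + 2 ^ p * ∫ x, |f n x| ^ p ∂μ := by
          rw [integral_add (hgint.const_mul _) ((hint n).const_mul _),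
            integral_const_mul, integral_const_mul]
      _ ≤ M := by nlinarith [hC₀ n]
  -- the integrand h n
  set h : ℕ → X → ℝ := fun n x => |f n x| ^ p - |g x - f n x| ^ p - |g x| ^ p with hhdef
  have hhint : ∀ n, Integrable (h n) μ := fun n => ((hint n).sub (hJint n)).sub hgint
  -- main limit: ∫ h n → 0
  have T : Tendsto (fun n => ∫ x, h n x ∂μ) atTop (nhds 0) := by
    rw [Metric.tendsto_atTop]
    intro ε' hε'
    have hεp : 0 < ε' / (2 * (M + 1)) := by positivity
    obtain ⟨C, hC0, hkey⟩ := aux_key hp hεp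
    set ε : ℝ := ε' / (2 * (M + 1)) with hεdef
    set W : ℕ → X → ℝ := fun n x => max (|h n x| - ε * |g x - f n x| ^ p) 0 with hWdef
    have hWbd : ∀ n x, |h n x| ≤ ε * |g x - f n x| ^ p + (C + 1) * |g x| ^ p := by
      intro n x
      have hk := hkey (f n x - g x) (g x)
      have he : f n x - g x + g x = f n x := by ring
      rw [he, abs_sub_comm (f n x) (g x)] at hk
      have h3 : |h n x| ≤ |(|f n x| ^ p - |g x - f n x| ^ p)| + |g x| ^ p := by
        rw [hhdef]
        have := abs_sub (|f n x| ^ p - |g x - f n x| ^ p) (|g x| ^ p)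
        rw [abs_of_nonneg (Real.rpow_nonneg (abs_nonneg (g x)) p)] at this
        exact this
      linarith
    have hWnonneg : ∀ n x, 0 ≤ W n x := fun n x => le_max_right _ _
    have hWle : ∀ n x, W n x ≤ (C + 1) * |g x| ^ p := by
      intro n x
      apply max_le _ (by positivity)
      have := hWbd n x
      linarith
    have hWmeas : ∀ n, Measurable (W n) :=
      fun n => (((((hmf n).sub (hmJ n)).sub hmg).abs.sub
        ((hmJ n).const_mul ε)).max measurable_const)
    have hWint : ∀ n, Integrable (W n) μ := by
      intro n
      refine Integrable.mono' (hgint.const_mul (C + 1)) (hWmeas n).aestronglyMeasurable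
        (Eventually.of_forall fun x => ?_)
      rw [Real.norm_eq_abs, abs_of_nonneg (hWnonneg n x)]
      exact hWle n x
    have hWtend : Tendsto (fun n => ∫ x, W n x ∂μ) atTop (nhds 0) := by
      have := tendsto_integral_of_dominated_convergence (μ := μ)
        (F := W) (f := fun _ => (0:ℝ)) (fun x => (C + 1) * |g x| ^ p)
        (fun n => (hWmeas n).aestronglyMeasurable) (hgint.const_mul (C + 1))
        (fun n => Eventually.of_forall fun x => by
          rw [Real.norm_eq_abs, abs_of_nonneg (hWnonneg n x)]; exact hWle n x)
        ?_
      · simpa using this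
      · filter_upwards [hae] with x hx
        have h1 : Tendsto (fun n => |g x - f n x| ^ p) atTop (nhds 0) := by
          have := ((tendsto_const_nhds (x := g x)).sub hx).abs.rpow_const
            (Or.inr hp0) (l := atTop)
          simpa [Real.zero_rpow (ne_of_gt hppos)] using this
        have h2 : Tendsto (fun n => |f n x| ^ p) atTop (nhds (|g x| ^ p)) :=
          hx.abs.rpow_const (Or.inr hp0)
        have h3 : Tendsto (fun n => h n x) atTop (nhds 0) := by
          have := (h2.sub h1).sub (tendsto_const_nhds (x := |g x| ^ p))
          simpa [hhdef] using this
        have h4 : Tendsto (fun n => W n x) atTop (nhds (max (|(0:ℝ)| - ε * 0) 0)) :=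
          (h3.abs.sub (h1.const_mul ε)).max tendsto_const_nhds
        simpa using h4
    obtain ⟨N, hN⟩ := (Metric.tendsto_atTop.mp hWtend) (ε' / 2) (by linarith)
    refine ⟨N, fun n hn => ?_⟩
    have hWn : ∫ x, W n x ∂μ < ε' / 2 := by
      have := hN n hn
      rw [Real.dist_eq, sub_zero] at this
      exact lt_of_le_of_lt (le_abs_self _) this
    have step1 : |∫ x, h n x ∂μ| ≤ ∫ x, |h n x| ∂μ := by
      have := norm_integral_le_integral_norm (μ := μ) (h n)
      simpa [Real.norm_eq_abs] using this
    have step2 : ∫ x, |h n x| ∂μ ≤ (∫ x, W n x ∂μ) + ε * ∫ x, |g x - f n x| ^ p ∂μ := by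
      calc ∫ x, |h n x| ∂μ ≤ ∫ x, (W n x + ε * |g x - f n x| ^ p) ∂μ := by
            apply integral_mono (hhint n).abs ((hWint n).add ((hJint n).const_mul ε))
            intro x
            show |h n x| ≤ W n x + ε * |g x - f n x| ^ p
            have h5 : |h n x| - ε * |g x - f n x| ^ p ≤ W n x :=
              le_max_left _ _
            linarith
        _ = (∫ x, W n x ∂μ) + ε * ∫ x, |g x - f n x| ^ p ∂μ := by
            rw [integral_add (hWint n) ((hJint n).const_mul ε), integral_const_mul]
    have hεM : ε * ∫ x, |g x - f n x| ^ p ∂μ ≤ ε' / 2 := by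
      have h6 : ε * ∫ x, |g x - f n x| ^ p ∂μ ≤ ε * (M + 1) :=
        mul_le_mul_of_nonneg_left (by linarith [hJbdd n]) (le_of_lt hεp)
      have heq : ε * (M + 1) = ε' / 2 := by
        rw [hεdef]; field_simp
      exact h6.trans (le_of_eq heq)
    rw [Real.dist_eq, sub_zero]
    calc |∫ x, h n x ∂μ| ≤ ∫ x, |h n x| ∂μ := step1
      _ ≤ (∫ x, W n x ∂μ) + ε * ∫ x, |g x - f n x| ^ p ∂μ := step2
      _ < ε' / 2 + ε' / 2 := by linarith
      _ = ε' := by ring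
  refine ⟨hgint, ?_⟩
  have heq : (fun n => (∫ x, |f n x| ^ p ∂μ) - ∫ x, |g x - f n x| ^ p ∂μ)
      = fun n => (∫ x, h n x ∂μ) + K := by
    funext n
    have i1 : Integrable (fun x => |f n x| ^ p - |g x - f n x| ^ p) μ :=
      (hint n).sub (hJint n)
    have e1 : ∫ x, (|f n x| ^ p - |g x - f n x| ^ p - |g x| ^ p) ∂μ
        = (∫ x, (|f n x| ^ p - |g x - f n x| ^ p) ∂μ) - ∫ x, |g x| ^ p ∂μ :=
      integral_sub i1 hgint
    have e2 : ∫ x, (|f n x| ^ p - |g x - f n x| ^ p) ∂μ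
        = (∫ x, |f n x| ^ p ∂μ) - ∫ x, |g x - f n x| ^ p ∂μ :=
      integral_sub (hint n) (hJint n)
    rw [hhdef]
    simp only
    rw [e1, e2]
    ring
  rw [heq]
  have := T.add_const K
  simpa using this
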